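/- For every real constant C, the function y(x) = C(x−1)/(x−C) satisfies equation (24) at every point x with x ∉ {0, 1, C} and Δ(x,y(x)) ≠ 0: y''(x) + [x(x−1)·P_y]/Δ·(y'(x))³ + [(P_x − Q_y)x² + (Q_y − P_x − 2P)x + P_y·y² − (2P + P_y)·y + 2P]/Δ·(y'(x))² + [−Q_x·x² + (Q_x + 2Q)x + (P_x − Q_y)y² + (2Q − P_x + Q_y)y − 2Q]/Δ·y'(x) + [y(1−y)·Q_x]/Δ = 0, where all coefficient functions are evaluated at (x, y(x)). Thus equation (24) possesses the two-parameter family of solutions y = C(x−1)/(x−C) in addition to the integral curves of dy/dx = Q/P. -/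

import Mathlib

set_option maxHeartbeats 2000000


/-- Partial derivative with respect to the first argument. -/
noncomputable def pdx (F : ℝ × ℝ → ℝ) (p : ℝ × ℝ) : ℝ := fderiv ℝ F p (1, 0)

/-- Partial derivative with respect to the second argument. -/
noncomputable def pdy (F : ℝ × ℝ → ℝ) (p : ℝ × ℝ) : ℝ := fderiv ℝ F p (0, 1)

/-- `Δ(x,y) = y²P − yP + x²Q − xQ`. -/
noncomputable def Delta (P Q : ℝ × ℝ → ℝ) (p : ℝ × ℝ) : ℝ :=
  p.2 ^ 2 * P p - p.2 * P p + p.1 ^ 2 * Q p - p.1 * Q p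

/-- The left-hand side of equation (24), the second-order ODE cubic in the first
derivative associated with the planar system `dy/dx = Q/P`, evaluated with
`y = y(x)`, `y' = y'(x)`, `y'' = y''(x)`. -/
noncomputable def eq24LHS (P Q : ℝ × ℝ → ℝ) (x yx y1 y2 : ℝ) : ℝ :=
  y2
    + (x * (x - 1) * pdy P (x, yx)) / Delta P Q (x, yx) * y1 ^ 3
    + ((pdx P (x, yx) - pdy Q (x, yx)) * x ^ 2
        + (pdy Q (x, yx) - pdx P (x, yx) - 2 * P (x, yx)) * x
        + pdy P (x, yx) * yx ^ 2
        - (2 * P (x, yx) + pdy P (x, yx)) * yx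
        + 2 * P (x, yx)) / Delta P Q (x, yx) * y1 ^ 2
    + (-(pdx Q (x, yx)) * x ^ 2
        + (pdx Q (x, yx) + 2 * Q (x, yx)) * x
        + (pdx P (x, yx) - pdy Q (x, yx)) * yx ^ 2
        + (2 * Q (x, yx) - pdx P (x, yx) + pdy Q (x, yx)) * yx
        - 2 * Q (x, yx)) / Delta P Q (x, yx) * y1
    + (yx * (1 - yx) * pdx Q (x, yx)) / Delta P Q (x, yx)


lemma aux_hasDeriv (C t : ℝ) (ht : t ≠ C) :
    HasDerivAt (fun s : ℝ => C * (s - 1) / (s - C)) (C * (1 - C) / (t - C) ^ 2) t := by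
  have hne : t - C ≠ 0 := sub_ne_zero.mpr ht
  have h1 : HasDerivAt (fun s : ℝ => C * (s - 1)) C t := by
    simpa using ((hasDerivAt_id t).sub_const 1).const_mul C
  have h2 : HasDerivAt (fun s : ℝ => s - C) 1 t := (hasDerivAt_id t).sub_const C
  have := h1.fun_div h2 hne
  refine this.congr_deriv ?_
  rw [div_eq_div_iff (pow_ne_zero 2 hne) (pow_ne_zero 2 hne)]
  ring

lemma aux_deriv_eq (C : ℝ) :
    ∀ t : ℝ, t ≠ C → deriv (fun s : ℝ => C * (s - 1) / (s - C)) t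
      = C * (1 - C) / (t - C) ^ 2 := fun t ht => (aux_hasDeriv C t ht).deriv

lemma aux_combine (y2 A B Cc D E y1 : ℝ) (hE : E ≠ 0)
    (h : A * y1 ^ 3 + B * y1 ^ 2 + Cc * y1 + D + y2 * E = 0) :
    y2 + A / E * y1 ^ 3 + B / E * y1 ^ 2 + Cc / E * y1 + D / E = 0 := by
  have e : y2 + A / E * y1 ^ 3 + B / E * y1 ^ 2 + Cc / E * y1 + D / E
      = (A * y1 ^ 3 + B * y1 ^ 2 + Cc * y1 + D + y2 * E) / E := by
    field_simp
    ring
  rw [e, h, zero_div]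

/-- For every constant `C`, the function `y(x) = C(x−1)/(x−C)`
satisfies equation (24) at every `x ∉ {0, 1, C}` with `Δ(x, y(x)) ≠ 0`; thus
equation (24) possesses the two-parameter family of solutions `y = C(x−1)/(x−C)`
in addition to the integral curves of `dy/dx = Q/P`. -/
theorem stmt_11 (P Q : ℝ × ℝ → ℝ) (hP : ContDiff ℝ 1 P) (hQ : ContDiff ℝ 1 Q)
    (C : ℝ) (x : ℝ) (hx0 : x ≠ 0) (hx1 : x ≠ 1) (hxC : x ≠ C)
    (hΔ : Delta P Q (x, C * (x - 1) / (x - C)) ≠ 0) :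
    ∃ y2 : ℝ,
      HasDerivAt (deriv fun t : ℝ => C * (t - 1) / (t - C)) y2 x ∧
      eq24LHS P Q x (C * (x - 1) / (x - C))
        (deriv (fun t : ℝ => C * (t - 1) / (t - C)) x) y2 = 0 := by
  have hne : x - C ≠ 0 := sub_ne_zero.mpr hxC
  refine ⟨-2 * (C * (1 - C)) / (x - C) ^ 3, ?_, ?_⟩
  · have hopen : {t : ℝ | t ≠ C} ∈ nhds x := isOpen_ne.mem_nhds hxC
    have hev : deriv (fun s : ℝ => C * (s - 1) / (s - C))
        =ᶠ[nhds x] fun t => C * (1 - C) / (t - C) ^ 2 :=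
      Filter.eventuallyEq_of_mem hopen (fun t ht => aux_deriv_eq C t ht)
    have hd2 : HasDerivAt (fun t : ℝ => C * (1 - C) / (t - C) ^ 2)
        (-2 * (C * (1 - C)) / (x - C) ^ 3) x := by
      have h2 : HasDerivAt (fun t : ℝ => (t - C) ^ 2) (2 * (x - C)) x := by
        simpa using ((hasDerivAt_id x).sub_const C).fun_pow 2
      have := (hasDerivAt_const x (C * (1 - C))).fun_div h2 (pow_ne_zero 2 hne)
      refine this.congr_deriv ?_
      rw [div_eq_div_iff (pow_ne_zero 2 (pow_ne_zero 2 hne)) (pow_ne_zero 3 hne)]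
      ring
    exact hd2.congr_of_eventuallyEq hev
  · rw [aux_deriv_eq C x hxC]
    unfold eq24LHS
    refine aux_combine _ _ _ _ _ _ _ hΔ ?_
    unfold Delta
    generalize pdx P (x, C * (x - 1) / (x - C)) = a
    generalize pdy P (x, C * (x - 1) / (x - C)) = b
    generalize pdx Q (x, C * (x - 1) / (x - C)) = c
    generalize pdy Q (x, C * (x - 1) / (x - C)) = d
    generalize P (x, C * (x - 1) / (x - C)) = p
    generalize Q (x, C * (x - 1) / (x - C)) = q
    field_simp
    ring
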